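/- Let A = Σ_{π ∈ S_n} a_π P_d(π) with real coefficients and suppose ε := n²/d ≤ 1. Then the operator norm of A satisfies ‖A‖_∞ ≥ (1 − ε/2)·max_π |a_π|. -/

import Mathlib

/-- The permutation operator `P_d(π)` on `(ℂ^d)^{⊗ n}`. -/
def Pmat (n d : ℕ) (π : Equiv.Perm (Fin n)) :
    Matrix (Fin n → Fin d) (Fin n → Fin d) ℂ :=
  Matrix.of fun x y => if y = x ∘ π then 1 else 0

theorem op_norm_lower_bound_of_perm_combination (n d : ℕ) (hd : 1 ≤ d)
    (a : Equiv.Perm (Fin n) → ℝ) (hε : (n : ℝ) ^ 2 / d ≤ 1) :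
    let A : Matrix (Fin n → Fin d) (Fin n → Fin d) ℂ :=
      ∑ π : Equiv.Perm (Fin n), (a π : ℂ) • Pmat n d π
    let ε : ℝ := (n : ℝ) ^ 2 / d
    (1 - ε / 2) * (⨆ π : Equiv.Perm (Fin n), |a π|)
      ≤ ‖Matrix.toEuclideanCLM (𝕜 := ℂ) (n := Fin n → Fin d) A‖ := by
  intro A ε
  have hd0 : (0:ℝ) < (d:ℝ) := by exact_mod_cast hd
  have hn2 : ((n:ℝ))^2 ≤ (d:ℝ) := by
    have := (div_le_one hd0).mp hε
    exact this
  have hnd : n ≤ d := by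
    have hn2' : n ^ 2 ≤ d := by exact_mod_cast hn2
    exact le_trans (Nat.le_self_pow two_ne_zero n) hn2'
  set z : Fin n → Fin d := Fin.castLE hnd with hz
  have hzinj : Function.Injective z := Fin.castLE_injective hnd
  set T := Matrix.toEuclideanCLM (𝕜 := ℂ) (n := Fin n → Fin d) A with hT
  -- key bound: every |a π| is at most ‖T‖
  have key : ∀ π : Equiv.Perm (Fin n), |a π| ≤ ‖T‖ := by
    intro π
    set v : EuclideanSpace ℂ (Fin n → Fin d) := EuclideanSpace.single z 1 with hv
    have hvnorm : ‖v‖ = 1 := by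
      rw [hv, EuclideanSpace.norm_single]; simp
    set x0 : Fin n → Fin d := z ∘ ⇑π⁻¹ with hx0
    -- the x0 coordinate of T v equals a π
    have happ : (T v) x0 = (a π : ℂ) := by
      have hveq : v = (WithLp.equiv _ _).symm (Pi.single z (1:ℂ)) := rfl
      rw [hT, hveq, WithLp.equiv_symm_apply, Matrix.toEuclideanCLM_toLp]
      have : (A.mulVec (Pi.single z (1:ℂ))) x0 = (a π : ℂ) := by
        rw [Matrix.mulVec_single]
        show A x0 z * 1 = (a π : ℂ)
        have hA : A x0 z = ∑ σ : Equiv.Perm (Fin n),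
            (a σ : ℂ) * (if z = x0 ∘ ⇑σ then 1 else 0) := by
          simp [A, Matrix.sum_apply, Pmat]
        rw [mul_one, hA, Finset.sum_eq_single π]
        · have : z = x0 ∘ ⇑π := by
            funext i
            simp [hx0, Function.comp]
          simp [this]
        · intro σ _ hσ
          have : ¬ (z = x0 ∘ ⇑σ) := by
            intro h
            apply hσ
            ext i
            have h1 := congrFun h i
            simp only [hx0, Function.comp] at h1
            have h2 : i = π⁻¹ (σ i) := hzinj h1
            have h3 : σ i = π i := by
              have := congrArg π h2
              simpa using this.symm
            rw [h3]
          simp [this]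
        · intro h
          exact absurd (Finset.mem_univ π) h
      simpa using this
    -- coordinate is bounded by the norm
    have hcoord : ‖(T v) x0‖ ≤ ‖T v‖ := by
      have := norm_inner_le_norm (𝕜 := ℂ) (EuclideanSpace.single x0 (1:ℂ)) (T v)
      rw [EuclideanSpace.inner_single_left] at this
      simpa [EuclideanSpace.norm_single] using this
    have hTv : ‖T v‖ ≤ ‖T‖ := by
      calc ‖T v‖ ≤ ‖T‖ * ‖v‖ := T.le_opNorm v
        _ = ‖T‖ := by rw [hvnorm, mul_one]
    calc |a π| = ‖(T v) x0‖ := by rw [happ]; simp [Complex.norm_real]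
      _ ≤ ‖T v‖ := hcoord
      _ ≤ ‖T‖ := hTv
  have hsup : (⨆ π : Equiv.Perm (Fin n), |a π|) ≤ ‖T‖ := ciSup_le key
  have hsup0 : 0 ≤ (⨆ π : Equiv.Perm (Fin n), |a π|) := by
    have := le_ciSup (f := fun π : Equiv.Perm (Fin n) => |a π|)
      (Set.Finite.bddAbove (Set.finite_range _)) 1
    exact le_trans (abs_nonneg _) this
  have hε0 : 0 ≤ ε := div_nonneg (sq_nonneg _) hd0.le
  calc (1 - ε / 2) * (⨆ π : Equiv.Perm (Fin n), |a π|)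
      ≤ 1 * (⨆ π : Equiv.Perm (Fin n), |a π|) := by
        apply mul_le_mul_of_nonneg_right _ hsup0
        linarith
    _ = (⨆ π : Equiv.Perm (Fin n), |a π|) := one_mul _
    _ ≤ ‖T‖ := hsup
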